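/- Let k ≥ 2, μ > 0, p > 1. Suppose u : (0,1) → ℝ is C², positive, satisfies min(u''(r)+(k-1)u'(r)/r, k·u'(r)/r) + μ·u(r)/r² = u(r)^p for all r ∈ (0,1), and suppose lim_{r→0⁺} u(r)·r^{2/(p-1)} = +∞. Then u'(r) ≥ 0 for all sufficiently small r > 0. -/

import Mathlib

open Set Filter

theorem stmt15 (k : ℕ) (hk : 2 ≤ k)
    (μ p : ℝ) (hμ : 0 < μ) (hp : 1 < p)
    (u u' u'' : ℝ → ℝ)
    (hu' : ∀ r ∈ Ioo (0:ℝ) 1, HasDerivAt u (u' r) r)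
    (hu'' : ∀ r ∈ Ioo (0:ℝ) 1, HasDerivAt u' (u'' r) r)
    (hu''c : ContinuousOn u'' (Ioo (0:ℝ) 1))
    (hupos : ∀ r ∈ Ioo (0:ℝ) 1, 0 < u r)
    (heq : ∀ r ∈ Ioo (0:ℝ) 1,
      min (u'' r + ((k:ℝ) - 1) * u' r / r) ((k:ℝ) * u' r / r)
        + μ * u r / r ^ 2 = u r ^ p)
    (hblow : Tendsto (fun r : ℝ => u r * r ^ (2 / (p - 1)))
      (nhdsWithin 0 (Ioi 0)) atTop) :
    ∃ r₀ ∈ Ioo (0:ℝ) 1, ∀ r ∈ Ioo (0:ℝ) r₀, 0 ≤ u' r := by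
  have hpm : (0:ℝ) < p - 1 := by linarith
  set M : ℝ := μ ^ ((p - 1)⁻¹) with hMdef
  have hM0 : 0 ≤ M := Real.rpow_nonneg hμ.le _
  have hev : ∀ᶠ r in nhdsWithin 0 (Ioi 0), M < u r * r ^ (2 / (p - 1)) :=
    hblow.eventually (eventually_gt_atTop M)
  rw [eventually_nhdsWithin_iff, Metric.eventually_nhds_iff] at hev
  obtain ⟨ε, hε, h⟩ := hev
  refine ⟨min ε 1 / 2, ⟨by positivity, by
    have : min ε 1 ≤ 1 := min_le_right _ _
    linarith⟩, ?_⟩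
  intro r hr
  have hrε : r < ε := lt_of_lt_of_le hr.2 (by
    have : min ε 1 ≤ ε := min_le_left _ _
    linarith)
  have hr1 : r ∈ Ioo (0:ℝ) 1 := ⟨hr.1, lt_of_lt_of_le hr.2 (by
    have : min ε 1 ≤ 1 := min_le_right _ _
    linarith)⟩
  have hr0 : 0 < r := hr.1
  have hup : 0 < u r := hupos r hr1
  have hv : M < u r * r ^ (2 / (p - 1)) := by
    apply h _ hr0
    simpa [Real.dist_eq, abs_of_pos hr0] using hrε
  -- raise to the power p-1
  have key : μ < u r ^ (p - 1) * r ^ 2 := by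
    have h1 : M ^ (p - 1) < (u r * r ^ (2 / (p - 1))) ^ (p - 1) :=
      Real.rpow_lt_rpow hM0 hv hpm
    have hL : M ^ (p - 1) = μ := by
      rw [hMdef, ← Real.rpow_mul hμ.le, inv_mul_cancel₀ hpm.ne', Real.rpow_one]
    have hR : (u r * r ^ (2 / (p - 1))) ^ (p - 1)
        = u r ^ (p - 1) * r ^ 2 := by
      rw [Real.mul_rpow hup.le (Real.rpow_nonneg hr0.le _),
        ← Real.rpow_mul hr0.le, div_mul_cancel₀ _ hpm.ne']
      norm_num [Real.rpow_natCast]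
    rw [hL, hR] at h1
    exact h1
  have hr2 : (0:ℝ) < r ^ 2 := by positivity
  have key2 : μ * u r / r ^ 2 < u r ^ p := by
    have h3 : μ * u r < u r ^ (p - 1) * r ^ 2 * u r :=
      mul_lt_mul_of_pos_right key hup
    have h4 : μ * u r / r ^ 2 < u r ^ (p - 1) * r ^ 2 * u r / r ^ 2 := by
      gcongr
    have h5 : u r ^ (p - 1) * r ^ 2 * u r / r ^ 2 = u r ^ p := by
      have : u r ^ (p - 1) * u r = u r ^ p := by
        rw [← Real.rpow_add_one hup.ne']
        norm_num
      field_simp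
      exact this
    rwa [h5] at h4
  have hmin : 0 < min (u'' r + ((k:ℝ) - 1) * u' r / r) ((k:ℝ) * u' r / r) := by
    have := heq r hr1
    linarith
  have hb : 0 < (k:ℝ) * u' r / r :=
    lt_of_lt_of_le hmin (min_le_right _ _)
  have hk0 : (0:ℝ) < (k:ℝ) := by positivity
  have : 0 < (k:ℝ) * u' r := (div_pos_iff.mp hb).resolve_right
    (fun ⟨_, h2⟩ => absurd hr0 (not_lt.mpr h2.le)) |>.1
  nlinarith
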